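/- Let N and N_r be integers with 2 ≤ N ≤ N_r, set n = N·N_r, and for N ≤ k ≤ (N−1)·N_r + 1 define G_{n,k}(u) = ∑_{i=0}^{k−1} [n!·C(k−1,i)·(−1)^i / ((n−k+i+1)·(n−k)!·(k−1)!)] · u^{n−k+i+1}. Let p_N, …, p_{(N−1)N_r+1} be nonnegative reals summing to 1. Then lim_{u→0⁺} [∑_{k=N}^{(N−1)N_r+1} p_k · G_{n,k}(u)] / u^{N_r} = p_{(N−1)N_r+1} · (N·N_r)! / (N_r · (N_r − 1)! · ((N−1)·N_r)!). -/

import Mathlib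

/-- `G n k u = ∑_{i=0}^{k−1} n!·C(k−1,i)·(−1)^i / ((n−k+i+1)(n−k)!(k−1)!) · u^{n−k+i+1}`,
the CDF of the `k`-th largest of `n` i.i.d. random variables expressed as a
polynomial in the common per-entry CDF value `u`. -/
noncomputable def orderCDF (n k : ℕ) (u : ℝ) : ℝ :=
  ∑ i ∈ Finset.range k,
    ((n.factorial : ℝ) * (((k - 1).choose i : ℝ)) * (-1 : ℝ) ^ i
        / (((n : ℝ) - (k : ℝ) + (i : ℝ) + 1) * ((n - k).factorial : ℝ)
            * ((k - 1).factorial : ℝ)))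
      * u ^ (n - k + i + 1)

/-- Diversity order of ORS: for `2 ≤ N ≤ Nr`, `n = N·Nr`, and nonnegative reals
`p_N, …, p_{(N−1)Nr+1}` summing to `1`,
`lim_{u→0⁺} (∑ₖ p_k · G_{n,k}(u)) / u^{Nr}
   = p_{(N−1)Nr+1} · (N·Nr)! / (Nr · (Nr−1)! · ((N−1)·Nr)!)`. -/
theorem ORS_diversity_order (N Nr : ℕ) (hN : 2 ≤ N) (hNr : N ≤ Nr)
    (p : ℕ → ℝ) (hp0 : ∀ k ∈ Finset.Icc N ((N - 1) * Nr + 1), 0 ≤ p k)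
    (hp1 : ∑ k ∈ Finset.Icc N ((N - 1) * Nr + 1), p k = 1) :
    Filter.Tendsto
      (fun u : ℝ =>
        (∑ k ∈ Finset.Icc N ((N - 1) * Nr + 1), p k * orderCDF (N * Nr) k u) / u ^ Nr)
      (nhdsWithin 0 (Set.Ioi 0))
      (nhds (p ((N - 1) * Nr + 1) * ((N * Nr).factorial : ℝ)
        / ((Nr : ℝ) * ((Nr - 1).factorial : ℝ) * (((N - 1) * Nr).factorial : ℝ)))) := by
  have hNr2 : 2 ≤ Nr := le_trans hN hNr
  set n := N * Nr with hn
  set K := (N - 1) * Nr + 1 with hK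
  have hmul : (N - 1) * Nr + Nr = N * Nr := by
    have h1 : N - 1 + 1 = N := by omega
    calc (N - 1) * Nr + Nr = (N - 1 + 1) * Nr := by ring
      _ = N * Nr := by rw [h1]
  have hNK : N ≤ K := by
    have h2 : N - 1 ≤ (N - 1) * Nr := Nat.le_mul_of_pos_right _ (by omega)
    omega
  set f : ℝ → ℝ := fun u => ∑ k ∈ Finset.Icc N K, p k * ∑ i ∈ Finset.range k,
    ((n.factorial : ℝ) * (((k - 1).choose i : ℝ)) * (-1 : ℝ) ^ i
        / (((n : ℝ) - (k : ℝ) + (i : ℝ) + 1) * ((n - k).factorial : ℝ)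
            * ((k - 1).factorial : ℝ)))
      * u ^ (n - k + i + 1 - Nr) with hf
  have hcont : Continuous f := by
    apply continuous_finset_sum
    intro k _
    exact continuous_const.mul (continuous_finset_sum _ fun i _ =>
      continuous_const.mul (continuous_pow _))
  have hle : ∀ k ∈ Finset.Icc N K, ∀ i, Nr ≤ n - k + i + 1 := by
    intro k hk i
    rw [Finset.mem_Icc] at hk
    omega
  have heq : ∀ u ∈ Set.Ioi (0:ℝ),
      f u = (∑ k ∈ Finset.Icc N K, p k * orderCDF n k u) / u ^ Nr := by
    intro u hu
    have hu0 : u ≠ 0 := ne_of_gt hu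
    rw [Finset.sum_div]
    refine Finset.sum_congr rfl fun k hk => ?_
    rw [mul_div_assoc, orderCDF, Finset.sum_div]
    congr 1
    refine Finset.sum_congr rfl fun i _ => ?_
    rw [pow_sub₀ u hu0 (hle k hk i)]
    ring
  have hf0 : f 0 = p K * ((n.factorial : ℝ)
      / ((Nr : ℝ) * ((Nr - 1).factorial : ℝ) * (((N - 1) * Nr).factorial : ℝ))) := by
    simp only [hf]
    rw [Finset.sum_eq_single K]
    · congr 1
      rw [Finset.sum_eq_single 0]
      · have e1 : n - K + 0 + 1 - Nr = 0 := by omega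
        have e2 : n - K = Nr - 1 := by omega
        have e3 : K - 1 = (N - 1) * Nr := by omega
        have hKn : (n : ℝ) + 1 = (K : ℝ) + (Nr : ℝ) := by
          exact_mod_cast congrArg (Nat.cast : ℕ → ℝ) (by omega : n + 1 = K + Nr)
        have e4 : (n : ℝ) - (K : ℝ) + ((0 : ℕ) : ℝ) + 1 = (Nr : ℝ) := by
          push_cast at hKn ⊢; linarith
        rw [e1, e2, e3, e4]
        simp
      · intro i hi hi0
        have : n - K + i + 1 - Nr = i := by omega
        rw [this]
        simp [zero_pow hi0]
      · intro h
        exact absurd (Finset.mem_range.mpr (by omega)) h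
    · intro k hk hkK
      rw [Finset.mem_Icc] at hk
      have : ∀ i ∈ Finset.range k,
          ((n.factorial : ℝ) * (((k - 1).choose i : ℝ)) * (-1 : ℝ) ^ i
            / (((n : ℝ) - (k : ℝ) + (i : ℝ) + 1) * ((n - k).factorial : ℝ)
                * ((k - 1).factorial : ℝ)))
          * (0:ℝ) ^ (n - k + i + 1 - Nr) = 0 := by
        intro i _
        have hpos : n - k + i + 1 - Nr ≠ 0 := by omega
        simp [zero_pow hpos]
      rw [Finset.sum_eq_zero this, mul_zero]
    · intro h
      exact absurd (Finset.mem_Icc.mpr ⟨hNK, le_refl K⟩) h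
  have htend : Filter.Tendsto f (nhdsWithin 0 (Set.Ioi 0)) (nhds (f 0)) :=
    (hcont.tendsto 0).mono_left nhdsWithin_le_nhds
  rw [hf0] at htend
  rw [mul_div_assoc]
  refine htend.congr' ?_
  filter_upwards [self_mem_nhdsWithin] with u hu
  exact heq u hu
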